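/- arXiv:2407.03184 — 2 statements merged into one kernel-verified Lean document; each statement's English description precedes it below -/
import Mathlib

section
/- Let L be an automorphism of 𝕋² and M_k(x) = kx mod 1. If E ⊂ 𝕋² is (n, ε)-separated with respect to L, then E' = M_k^{-1}(E) is (n, ε/k)-separated with respect to L, and |E'| = k² |E|. -/
open Filter Topology

/-- The 2-torus `𝕋² = ℝ/ℤ × ℝ/ℤ` with its flat metric. -/
abbrev T2 := AddCircle (1 : ℝ) × AddCircle (1 : ℝ)

/-- The toral map induced by an integer matrix `A`. -/
noncomputable def matMap (A : Matrix (Fin 2) (Fin 2) ℤ) : T2 → T2 :=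
  fun p => (A 0 0 • p.1 + A 0 1 • p.2, A 1 0 • p.1 + A 1 1 • p.2)

/-- The map `M_k(x) = k x mod 1` on the torus. -/
noncomputable def mulMap (k : ℕ) : T2 → T2 := fun p => (k • p.1, k • p.2)

/-- `E` is `(n, ε)`-separated for `T`: distinct points of `E` are `ε`-apart at some
time `j < n`. -/
def IsSeparated {X : Type*} [PseudoMetricSpace X] (T : X → X) (n : ℕ) (ε : ℝ)
    (E : Set X) : Prop :=
  ∀ x ∈ E, ∀ y ∈ E, x ≠ y → ∃ j < n, ε ≤ dist (T^[j] x) (T^[j] y)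

lemma mulMap_add (k : ℕ) (p q : T2) : mulMap k (p + q) = mulMap k p + mulMap k q := by
  simp [mulMap, smul_add, Prod.ext_iff]

lemma mulMap_sub (k : ℕ) (p q : T2) : mulMap k (p - q) = mulMap k p - mulMap k q := by
  simp [mulMap, smul_sub, Prod.ext_iff]

lemma smul_comm' (a : ℤ) (k : ℕ) (x : AddCircle (1 : ℝ)) : a • (k • x) = k • (a • x) := by
  rw [← natCast_zsmul x k, ← natCast_zsmul (a • x) k, smul_comm]

lemma matMap_mulMap (A : Matrix (Fin 2) (Fin 2) ℤ) (k : ℕ) (p : T2) :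
    matMap A (mulMap k p) = mulMap k (matMap A p) := by
  simp [matMap, mulMap, smul_add, smul_comm']

lemma iter_comm (A : Matrix (Fin 2) (Fin 2) ℤ) (k : ℕ) :
    ∀ (j : ℕ) (p : T2), (matMap A)^[j] (mulMap k p) = mulMap k ((matMap A)^[j] p)
  | 0, p => rfl
  | j + 1, p => by
      rw [Function.iterate_succ_apply, Function.iterate_succ_apply, matMap_mulMap,
        iter_comm A k j]

lemma dist_mulMap_le (k : ℕ) (p q : T2) : dist (mulMap k p) (mulMap k q) ≤ k * dist p q := by
  have h1 : dist (k • p.1) (k • q.1) ≤ k * dist p.1 q.1 := by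
    rw [dist_eq_norm, dist_eq_norm, ← smul_sub]; exact norm_nsmul_le
  have h2 : dist (k • p.2) (k • q.2) ≤ k * dist p.2 q.2 := by
    rw [dist_eq_norm, dist_eq_norm, ← smul_sub]; exact norm_nsmul_le
  rw [Prod.dist_eq, Prod.dist_eq]
  have hk : (0:ℝ) ≤ k := Nat.cast_nonneg k
  exact max_le (h1.trans (by gcongr; exact le_max_left _ _))
    (h2.trans (by gcongr; exact le_max_right _ _))

lemma norm_torsion_lb (k : ℕ) (hk : 1 ≤ k) (a : AddCircle (1 : ℝ)) (ha : a ≠ 0)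
    (h : k • a = 0) : 1 / (k : ℝ) ≤ ‖a‖ := by
  induction a using QuotientAddGroup.induction_on with
  | H x =>
    rw [← AddCircle.coe_nsmul, AddCircle.coe_eq_zero_iff] at h
    obtain ⟨m, hm⟩ := h
    have hm' : (m : ℝ) = k * x := by
      simpa [smul_eq_mul, nsmul_eq_mul] using hm
    set y : ℝ := x - round x with hy
    have hnorm : ‖((x : ℝ) : AddCircle (1:ℝ))‖ = |y| := UnitAddCircle.norm_eq
    have hy0 : y ≠ 0 := by
      intro h0
      apply ha
      have : x = (round x : ℝ) := by linarith [sub_eq_zero.mp h0]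
      rw [this, AddCircle.coe_eq_zero_iff]
      exact ⟨round x, by simp⟩
    have hint : (k : ℝ) * y = ((m - k * round x : ℤ) : ℝ) := by
      push_cast
      rw [hm']; ring
    have hmz : (m - k * round x : ℤ) ≠ 0 := by
      intro h0
      rw [h0] at hint
      simp only [Int.cast_zero] at hint
      have : y = 0 := by
        have hk0 : (k : ℝ) ≠ 0 := by positivity
        exact (mul_eq_zero.mp hint).resolve_left hk0
      exact hy0 this
    have h1 : (1 : ℝ) ≤ |(k : ℝ) * y| := by
      rw [hint]
      exact_mod_cast Int.one_le_abs hmz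
    rw [abs_mul, abs_of_nonneg (by positivity : (0:ℝ) ≤ (k:ℝ))] at h1
    rw [hnorm]
    rw [div_le_iff₀ (by positivity)]
    linarith [h1]

lemma card_torsion (k : ℕ) [NeZero k] :
    Nat.card {a : AddCircle (1 : ℝ) // k • a = 0} = k := by
  have hbij : Function.Bijective
      (fun j : ZMod k => (⟨ZMod.toAddCircle j, by
        rw [← map_nsmul]
        have : (k • j : ZMod k) = 0 := by
          simp [nsmul_eq_mul, ZMod.natCast_self]
        rw [this, map_zero]⟩ : {a : AddCircle (1 : ℝ) // k • a = 0})) := by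
    constructor
    · intro i j hij
      exact ZMod.toAddCircle_injective k (congrArg Subtype.val hij)
    · rintro ⟨a, ha⟩
      induction a using QuotientAddGroup.induction_on with
      | H x =>
        rw [← AddCircle.coe_nsmul, AddCircle.coe_eq_zero_iff] at ha
        obtain ⟨m, hm⟩ := ha
        have hm' : (m : ℝ) = k * x := by simpa [smul_eq_mul, nsmul_eq_mul] using hm
        refine ⟨(m : ZMod k), Subtype.ext ?_⟩
        show ZMod.toAddCircle ((m : ℤ) : ZMod k) = ((x : ℝ) : AddCircle (1:ℝ))
        rw [ZMod.toAddCircle_intCast]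
        congr 1
        rw [hm']
        exact mul_div_cancel_left₀ x (by exact_mod_cast NeZero.ne k)
  rw [Nat.card_congr (Equiv.ofBijective _ hbij).symm, Nat.card_zmod]

lemma card_ker (k : ℕ) [NeZero k] :
    Nat.card {p : T2 // mulMap k p = 0} = k ^ 2 := by
  have e2 : {p : T2 // mulMap k p = 0} ≃
      {a : AddCircle (1 : ℝ) // k • a = 0} × {b : AddCircle (1 : ℝ) // k • b = 0} :=
    (Equiv.subtypeEquivRight (fun p => by
      simp [mulMap, Prod.ext_iff])).trans (Equiv.subtypeProdEquivProd)
  rw [Nat.card_congr e2, Nat.card_prod, card_torsion, sq]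

lemma mulMap_surj (k : ℕ) (hk : 1 ≤ k) : Function.Surjective (mulMap k) := by
  have hc : ∀ a : AddCircle (1 : ℝ), ∃ b, k • b = a := by
    intro a
    induction a using QuotientAddGroup.induction_on with
    | H x =>
      refine ⟨((x / k : ℝ) : AddCircle (1:ℝ)), ?_⟩
      rw [← AddCircle.coe_nsmul]
      congr 1
      rw [nsmul_eq_mul]
      field_simp [show (k:ℝ) ≠ 0 by exact_mod_cast (show k ≠ 0 by omega)]
  rintro ⟨a, b⟩
  obtain ⟨a', ha⟩ := hc a
  obtain ⟨b', hb⟩ := hc b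
  exact ⟨(a', b'), by simp [mulMap, ha, hb]⟩

/-- if `E` is `(n, ε)`-separated for the toral automorphism `L`, then
`E' = M_k⁻¹(E)` is `(n, ε/k)`-separated, and `|E'| = k² |E|`. -/
theorem stmt5 (A : Matrix (Fin 2) (Fin 2) ℤ) (hdet : A.det = 1 ∨ A.det = -1)
    (k : ℕ) (hk : 1 ≤ k) (n : ℕ) (hn : 1 ≤ n) (ε : ℝ) (hε : ε ≤ 1)
    (E : Set T2) (hE : IsSeparated (matMap A) n ε E) :
    IsSeparated (matMap A) n (ε / k) (mulMap k ⁻¹' E) ∧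
    Nat.card (mulMap k ⁻¹' E) = k ^ 2 * Nat.card E := by
  haveI : NeZero k := ⟨by omega⟩
  have hk0 : (0:ℝ) < k := by exact_mod_cast hk
  constructor
  · intro x hx y hy hxy
    by_cases h : mulMap k x = mulMap k y
    · refine ⟨0, hn, ?_⟩
      simp only [Function.iterate_zero, id_eq]
      have hcomp : k • (x.1 - y.1) = 0 ∧ k • (x.2 - y.2) = 0 := by
        constructor <;> [have := congrArg Prod.fst h; have := congrArg Prod.snd h] <;>
          simp only [mulMap] at this <;> rw [smul_sub, this, sub_self]
      have hne : x.1 ≠ y.1 ∨ x.2 ≠ y.2 := by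
        by_contra hc
        push_neg at hc
        exact hxy (Prod.ext hc.1 hc.2)
      have hd : 1 / (k:ℝ) ≤ dist x y := by
        rw [Prod.dist_eq]
        rcases hne with hne | hne
        · refine le_trans ?_ (le_max_left _ _)
          rw [dist_eq_norm]
          exact norm_torsion_lb k hk _ (sub_ne_zero.mpr hne) hcomp.1
        · refine le_trans ?_ (le_max_right _ _)
          rw [dist_eq_norm]
          exact norm_torsion_lb k hk _ (sub_ne_zero.mpr hne) hcomp.2
      calc ε / k ≤ 1 / k := by gcongr
        _ ≤ dist x y := hd
    · obtain ⟨j, hj, hd⟩ := hE _ hx _ hy h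
      refine ⟨j, hj, ?_⟩
      rw [div_le_iff₀ hk0, mul_comm]
      calc ε ≤ dist ((matMap A)^[j] (mulMap k x)) ((matMap A)^[j] (mulMap k y)) := hd
        _ = dist (mulMap k ((matMap A)^[j] x)) (mulMap k ((matMap A)^[j] y)) := by
            rw [iter_comm, iter_comm]
        _ ≤ k * dist ((matMap A)^[j] x) ((matMap A)^[j] y) := dist_mulMap_le k _ _
  · have hsurj := mulMap_surj k hk
    set s := Function.surjInv hsurj with hs_def
    have hs : ∀ y, mulMap k (s y) = y := fun y => Function.surjInv_eq hsurj y
    have e : {p : T2 // mulMap k p = 0} × E ≃ (mulMap k ⁻¹' E) :=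
      { toFun := fun ze => ⟨ze.1.1 + s ze.2.1, by
          show mulMap k _ ∈ E
          rw [mulMap_add, ze.1.2, zero_add, hs]
          exact ze.2.2⟩
        invFun := fun x => (⟨x.1 - s (mulMap k x.1), by
            rw [mulMap_sub, hs, sub_self]⟩, ⟨mulMap k x.1, x.2⟩)
        left_inv := by
          rintro ⟨⟨z, hz⟩, ⟨e, he⟩⟩
          have hme : mulMap k (z + s e) = e := by
            rw [mulMap_add, hz, zero_add, hs]
          simp only [Prod.mk.injEq, Subtype.mk.injEq]
          constructor
          · rw [hme]; abel
          · exact hme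
        right_inv := by
          rintro ⟨x, hx⟩
          apply Subtype.ext
          simp only
          abel }
    rw [Nat.card_congr e.symm, Nat.card_prod, card_ker]
end

section
/- Let Ω be a mixing subshift of finite type with shift σ, and let ψ : Ω → ℝ be Hölder continuous. Suppose there exists M > 0 and a symbol 0 such that |S_{n+1} ψ(ω)| ≤ M whenever ω ∈ [0] and σⁿ ω ∈ [0] (where [0] is the cylinder of points with ω₀ = 0 and S_m ψ denotes the Birkhoff sum). Then S_n ψ(p) is uniformly bounded over all periodic points p with σⁿ p = p and all n; in particular, for every periodic point p of period n, |S_n ψ(p)| ≤ M + C for a constant C depending only on ψ and the mixing constant of Ω. -/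
open Filter Topology
open scoped Classical

/-- The standard metric on a two-sided shift space: `d(ω, ω') = 2^{−n}` where
`n = min { |j| : ω_j ≠ ω'_j }`, and `0` if `ω = ω'`. -/
noncomputable def shiftDist {A : Type*} (ω ω' : ℤ → A) : ℝ :=
  if ω = ω' then 0
  else (2 : ℝ) ^ (-((sInf {n : ℕ | ∃ j : ℤ, j.natAbs = n ∧ ω j ≠ ω' j} : ℕ) : ℤ))

/-- The left shift on two-sided sequences. -/
def shiftMap {A : Type*} (ω : ℤ → A) : ℤ → A := fun j => ω (j + 1)

/-- The two-sided subshift of finite type determined by the transition relation. -/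
def SFT {A : Type*} (Trans : A → A → Prop) : Set (ℤ → A) :=
  {ω : ℤ → A | ∀ j : ℤ, Trans (ω j) (ω (j + 1))}

lemma shift_iter {A : Type*} (ω : ℤ → A) (i : ℕ) (j : ℤ) :
    (shiftMap^[i] ω) j = ω (j + i) := by
  induction i generalizing j with
  | zero => simp
  | succ k ih =>
    rw [Function.iterate_succ_apply', shiftMap, ih]
    congr 1
    push_cast
    ring

lemma shift_iter_mem {A : Type*} {Trans : A → A → Prop} {ω : ℤ → A}
    (h : ω ∈ SFT Trans) (i : ℕ) : shiftMap^[i] ω ∈ SFT Trans := by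
  intro j
  rw [shift_iter, shift_iter]
  have := h (j + i)
  convert this using 2
  ring

lemma shiftDist_nonneg {A : Type*} (ω ω' : ℤ → A) : 0 ≤ shiftDist ω ω' := by
  unfold shiftDist
  split
  · exact le_rfl
  · positivity

lemma shiftDist_le_one {A : Type*} (ω ω' : ℤ → A) : shiftDist ω ω' ≤ 1 := by
  unfold shiftDist
  split
  · exact zero_le_one
  · exact zpow_le_one_of_nonpos₀ one_le_two (by simp)

lemma shiftDist_le_of_agree {A : Type*} {ω ω' : ℤ → A} {k : ℕ}
    (h : ∀ l : ℤ, l.natAbs ≤ k → ω l = ω' l) :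
    shiftDist ω ω' ≤ (2 : ℝ) ^ (-(k : ℤ)) := by
  unfold shiftDist
  split
  · positivity
  · rename_i hne
    apply zpow_le_zpow_right₀ one_le_two
    simp only [neg_le_neg_iff, Int.ofNat_le]
    have hnonempty : {n : ℕ | ∃ j : ℤ, j.natAbs = n ∧ ω j ≠ ω' j}.Nonempty := by
      by_contra hc
      apply hne
      funext j
      by_contra hj
      exact hc ⟨j.natAbs, j, rfl, hj⟩
    apply le_csInf hnonempty
    rintro m ⟨j, rfl, hj⟩
    by_contra hc
    exact hj (h j (by omega))

lemma mem_SFT_ofWord {A : Type*} (Trans : A → A → Prop) (u : ℕ → A) (L : ℕ) (hL : 0 < L)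
    (hu : ∀ i < L, Trans (u i) (u (i + 1))) (hw : u L = u 0) :
    (fun m : ℤ => u ((m % (L : ℤ)).toNat)) ∈ SFT Trans := by
  intro j
  have hLZ : (0 : ℤ) < (L : ℤ) := by exact_mod_cast hL
  set r := j % (L : ℤ) with hrdef
  have hr0 : 0 ≤ r := Int.emod_nonneg j hLZ.ne'
  have hrL : r < L := Int.emod_lt_of_pos j hLZ
  have h1 : (j + 1) % (L : ℤ) = (r + 1) % L := by
    conv_lhs => rw [← Int.mul_ediv_add_emod j L]
    rw [← hrdef]
    rw [show (L : ℤ) * (j / L) + r + 1 = (r + 1) + (j / L) * L by ring]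
    exact Int.add_mul_emod_self_right _ _ _
  show Trans (u r.toNat) (u ((j + 1) % (L : ℤ)).toNat)
  rw [h1]
  by_cases hc : r + 1 < L
  · rw [Int.emod_eq_of_lt (by omega) hc]
    have h2 : (r + 1).toNat = r.toNat + 1 := by omega
    rw [h2]
    exact hu r.toNat (by omega)
  · have hrL1 : r + 1 = L := by omega
    rw [hrL1]
    simp only [Int.emod_self, Int.toNat_zero]
    rw [← hw]
    have h3 : r.toNat = L - 1 := by omega
    rw [h3, show L = (L - 1) + 1 by omega]
    exact hu (L - 1) (by omega)

lemma rpow_two_zpow_neg {k : ℕ} {α : ℝ} :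
    ((2 : ℝ) ^ (-(k : ℤ))) ^ α = ((2 : ℝ) ^ (-α)) ^ k := by
  rw [← Real.rpow_intCast 2 (-(k : ℤ)), ← Real.rpow_natCast ((2:ℝ) ^ (-α)) k,
    ← Real.rpow_mul (by norm_num), ← Real.rpow_mul (by norm_num)]
  congr 1
  push_cast
  ring

/-- on a mixing SFT, if the Hölder function `ψ` has Birkhoff sums over
returns to the cylinder `[a₀]` bounded by `M` (`|S_{n+1} ψ(ω)| ≤ M` whenever `ω ∈ [a₀]`
and `σⁿ ω ∈ [a₀]`), then the Birkhoff sums over all periodic orbits are uniformly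
bounded: there is `C ≥ 0`, depending only on `ψ` and the mixing constant, with
`|S_n ψ(p)| ≤ M + C` for every periodic point `p` of period `n`. -/
theorem stmt14 {A : Type*} [Fintype A] (Trans : A → A → Prop) (N : ℕ) (hN : 0 < N)
    (hmix : ∀ a b : A, ∃ w : ℕ → A, w 0 = a ∧ w N = b ∧ ∀ i < N, Trans (w i) (w (i + 1)))
    (ψ : (ℤ → A) → ℝ) (Cψ α : ℝ) (hCψ : 0 ≤ Cψ) (hα : 0 < α)
    (hψ : ∀ ω ∈ SFT Trans, ∀ ω' ∈ SFT Trans, |ψ ω - ψ ω'| ≤ Cψ * shiftDist ω ω' ^ α)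
    (a₀ : A) (M : ℝ)
    (hM : ∀ ω ∈ SFT Trans, ∀ n : ℕ, ω 0 = a₀ → (shiftMap^[n] ω) 0 = a₀ →
      |∑ i ∈ Finset.range (n + 1), ψ (shiftMap^[i] ω)| ≤ M) :
    ∃ C ≥ 0, ∀ p ∈ SFT Trans, ∀ n : ℕ, 1 ≤ n → shiftMap^[n] p = p →
      |∑ i ∈ Finset.range n, ψ (shiftMap^[i] p)| ≤ M + C := by
  -- base point of the SFT
  obtain ⟨v, hv0, hvN, hvT⟩ := hmix a₀ a₀
  set ωs : ℤ → A := fun m => v ((m % (N : ℤ)).toNat) with hωs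
  have hωs_mem : ωs ∈ SFT Trans := mem_SFT_ofWord Trans v N hN hvT (by rw [hvN, hv0])
  -- uniform bound for ψ on the SFT
  set B : ℝ := |ψ ωs| + Cψ with hBdef
  have hB0 : 0 ≤ B := by positivity
  have hψ_bound : ∀ x ∈ SFT Trans, |ψ x| ≤ B := by
    intro x hx
    have h1 := hψ x hx ωs hωs_mem
    have h2 : shiftDist x ωs ^ α ≤ 1 :=
      Real.rpow_le_one (shiftDist_nonneg _ _) (shiftDist_le_one _ _) hα.le
    have h3 : |ψ x - ψ ωs| ≤ Cψ := by
      calc |ψ x - ψ ωs| ≤ Cψ * shiftDist x ωs ^ α := h1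
        _ ≤ Cψ * 1 := by apply mul_le_mul_of_nonneg_left h2 hCψ
        _ = Cψ := mul_one _
    calc |ψ x| = |(ψ x - ψ ωs) + ψ ωs| := by ring_nf
      _ ≤ |ψ x - ψ ωs| + |ψ ωs| := abs_add_le _ _
      _ ≤ Cψ + |ψ ωs| := by linarith
      _ = B := by rw [hBdef]; ring
  -- the geometric ratio
  set r : ℝ := (2 : ℝ) ^ (-α) with hrdef
  have hr0 : 0 < r := Real.rpow_pos_of_pos two_pos _
  have hr1 : r < 1 := Real.rpow_lt_one_of_one_lt_of_neg one_lt_two (by linarith)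
  have hgeo : ∀ m : ℕ, ∑ j ∈ Finset.range m, r ^ j ≤ 1 / (1 - r) := by
    intro m
    rw [geom_sum_eq hr1.ne m, show r ^ m - 1 = -(1 - r ^ m) by ring,
      show r - 1 = -(1 - r) by ring, neg_div_neg_eq]
    have hpow : 0 ≤ r ^ m := by positivity
    gcongr
    · linarith
  set C : ℝ := Cψ * (2 / (1 - r)) + (2 * (N : ℝ) + 1) * B with hCdef
  have hC0 : 0 ≤ C := by
    apply add_nonneg
    · exact mul_nonneg hCψ (div_nonneg (by norm_num) (by linarith))
    · exact mul_nonneg (by positivity) hB0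
  refine ⟨C, hC0, ?_⟩
  intro p hp n hn hper
  have hperiod : ∀ j : ℤ, p (j + n) = p j := by
    intro j
    conv_rhs => rw [← hper, shift_iter]
  obtain ⟨w1, hw10, hw1N, hw1T⟩ := hmix a₀ (p 0)
  obtain ⟨w2, hw20, hw2N, hw2T⟩ := hmix (p 0) a₀
  set L : ℕ := n + 2 * N with hLdef
  set u : ℕ → A := fun i =>
    if i < N then w1 i else if i ≤ N + n then p ((i : ℤ) - N) else w2 (i - (N + n)) with hudef
  have huval : ∀ i : ℕ,
      u i = if i < N then w1 i else if i ≤ N + n then p ((i : ℤ) - N) else w2 (i - (N + n)) :=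
    fun i => rfl
  have hu0 : u 0 = a₀ := by rw [huval, if_pos hN, hw10]
  have huL : u L = a₀ := by
    rw [huval, if_neg (by omega), if_neg (by omega), show L - (N + n) = N by omega, hw2N]
  have hup : ∀ i : ℕ, N ≤ i → i ≤ N + n → u i = p ((i : ℤ) - N) := by
    intro i h1 h2
    rw [huval, if_neg (by omega), if_pos h2]
  have huT : ∀ i < L, Trans (u i) (u (i + 1)) := by
    intro i hi
    rcases lt_trichotomy (i + 1) N with h1 | h1 | h1
    · rw [huval i, huval (i+1), if_pos (by omega), if_pos h1]
      exact hw1T i (by omega)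
    · rw [huval i, if_pos (by omega), hup (i+1) (by omega) (by omega),
        show ((i+1 : ℕ) : ℤ) - N = 0 by omega, ← hw1N, ← h1]
      exact hw1T i (by omega)
    · rcases lt_trichotomy (i + 1) (N + n + 1) with h2 | h2 | h2
      · -- N ≤ i, i + 1 ≤ N + n : inside the p-block
        rw [hup i (by omega) (by omega), hup (i+1) (by omega) (by omega)]
        have := hp ((i : ℤ) - N)
        rw [show ((i+1 : ℕ) : ℤ) - N = ((i : ℤ) - N) + 1 by push_cast; ring]
        exact this
      · -- i = N + n : junction into w2
        have hi' : i = N + n := by omega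
        rw [hup i (by omega) (by omega), huval (i+1), if_neg (by omega), if_neg (by omega),
          show i + 1 - (N + n) = 1 by omega]
        have : p ((i : ℤ) - N) = w2 0 := by
          rw [hw20, show ((i : ℤ)) - N = 0 + n by omega, hperiod 0]
        rw [this]
        exact hw2T 0 hN
      · -- N + n < i : inside w2
        rw [huval i, if_neg (by omega), if_neg (by omega), huval (i+1),
          if_neg (by omega), if_neg (by omega), show i + 1 - (N + n) = (i - (N + n)) + 1 by omega]
        exact hw2T (i - (N + n)) (by omega)
  set ω : ℤ → A := fun m => u ((m % (L : ℤ)).toNat) with hωdef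
  have hLpos : 0 < L := by omega
  have hLZ : (0 : ℤ) < (L : ℤ) := by exact_mod_cast hLpos
  have hωmem : ω ∈ SFT Trans := mem_SFT_ofWord Trans u L hLpos huT (by rw [huL, hu0])
  have hωval : ∀ m : ℤ, 0 ≤ m → m < L → ω m = u m.toNat := by
    intro m h0 h1
    show u ((m % (L : ℤ)).toNat) = u m.toNat
    rw [Int.emod_eq_of_lt h0 h1]
  have hωper : ∀ m : ℤ, ω (m + L) = ω m := by
    intro m
    show u (((m + L) % (L : ℤ)).toNat) = u ((m % (L : ℤ)).toNat)
    congr 1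
    rw [show m + (L : ℤ) = m + (L : ℤ) * 1 by ring, Int.add_mul_emod_self_left]
  have hω0 : ω 0 = a₀ := by rw [hωval 0 le_rfl hLZ, Int.toNat_zero, hu0]
  have hωL : (shiftMap^[L] ω) 0 = a₀ := by
    rw [shift_iter]
    exact (hωper 0).trans hω0
  have hsum := hM ω hωmem L hω0 hωL
  have hsplit : ∑ i ∈ Finset.range (L + 1), ψ (shiftMap^[i] ω)
      = (∑ i ∈ Finset.range N, ψ (shiftMap^[i] ω))
        + (∑ j ∈ Finset.range n, ψ (shiftMap^[N + j] ω))
        + (∑ i ∈ Finset.Ico (N + n) (L + 1), ψ (shiftMap^[i] ω)) := by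
    have e1 : ∑ i ∈ Finset.Ico N (N + n), ψ (shiftMap^[i] ω)
        = ∑ j ∈ Finset.range n, ψ (shiftMap^[N + j] ω) := by
      rw [Finset.sum_Ico_eq_sum_range]
      simp
    rw [← e1, Finset.range_eq_Ico,
      ← Finset.sum_Ico_consecutive (fun i => ψ (shiftMap^[i] ω))
        (show 0 ≤ N + n by omega) (show N + n ≤ L + 1 by omega),
      ← Finset.sum_Ico_consecutive (fun i => ψ (shiftMap^[i] ω))
        (show 0 ≤ N by omega) (show N ≤ N + n by omega), ← Finset.range_eq_Ico]
  have hdiff : ∀ j ∈ Finset.range n, |ψ (shiftMap^[j] p) - ψ (shiftMap^[N + j] ω)|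
      ≤ Cψ * r ^ (min j (n - j)) := by
    intro j hj
    rw [Finset.mem_range] at hj
    set k := min j (n - j) with hkdef
    have hk1 : k ≤ j := min_le_left _ _
    have hk2 : k ≤ n - j := min_le_right _ _
    have hagree : ∀ l : ℤ, l.natAbs ≤ k → (shiftMap^[j] p) l = (shiftMap^[N + j] ω) l := by
      intro l hl
      rw [shift_iter, shift_iter]
      have hm0 : (0 : ℤ) ≤ l + (N + j : ℕ) := by push_cast; omega
      have hmL : l + (N + j : ℕ) < (L : ℤ) := by push_cast; omega
      rw [hωval _ hm0 hmL, hup _ (by omega) (by omega)]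
      congr 1
      omega
    have hsd := shiftDist_le_of_agree hagree
    have hmem1 := shift_iter_mem hp j
    have hmem2 := shift_iter_mem hωmem (N + j)
    calc |ψ (shiftMap^[j] p) - ψ (shiftMap^[N + j] ω)|
        ≤ Cψ * shiftDist (shiftMap^[j] p) (shiftMap^[N + j] ω) ^ α := hψ _ hmem1 _ hmem2
      _ ≤ Cψ * ((2 : ℝ) ^ (-(k : ℤ))) ^ α := by
          apply mul_le_mul_of_nonneg_left _ hCψ
          exact Real.rpow_le_rpow (shiftDist_nonneg _ _) hsd hα.le
      _ = Cψ * r ^ k := by rw [rpow_two_zpow_neg, ← hrdef]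
  have hmin : ∑ j ∈ Finset.range n, r ^ (min j (n - j)) ≤ 2 / (1 - r) := by
    have h1 : ∀ j ∈ Finset.range n, r ^ (min j (n - j)) ≤ r ^ j + r ^ (n - 1 - j) := by
      intro j hj
      rw [Finset.mem_range] at hj
      rcases le_total j (n - j) with h | h
      · rw [min_eq_left h]
        nlinarith [pow_nonneg hr0.le (n - 1 - j)]
      · rw [min_eq_right h]
        have h2 := pow_le_pow_of_le_one hr0.le hr1.le (show n - 1 - j ≤ n - j by omega)
        nlinarith [pow_nonneg hr0.le j]
    calc ∑ j ∈ Finset.range n, r ^ (min j (n - j))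
        ≤ ∑ j ∈ Finset.range n, (r ^ j + r ^ (n - 1 - j)) := Finset.sum_le_sum h1
      _ = (∑ j ∈ Finset.range n, r ^ j) + ∑ j ∈ Finset.range n, r ^ (n - 1 - j) :=
          Finset.sum_add_distrib
      _ = (∑ j ∈ Finset.range n, r ^ j) + ∑ j ∈ Finset.range n, r ^ j := by
          rw [Finset.sum_range_reflect (fun j => r ^ j) n]
      _ ≤ 1 / (1 - r) + 1 / (1 - r) := add_le_add (hgeo n) (hgeo n)
      _ = 2 / (1 - r) := by ring
  have hD : |∑ j ∈ Finset.range n, (ψ (shiftMap^[j] p) - ψ (shiftMap^[N + j] ω))|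
      ≤ Cψ * (2 / (1 - r)) := by
    calc |∑ j ∈ Finset.range n, (ψ (shiftMap^[j] p) - ψ (shiftMap^[N + j] ω))|
        ≤ ∑ j ∈ Finset.range n, |ψ (shiftMap^[j] p) - ψ (shiftMap^[N + j] ω)| :=
          Finset.abs_sum_le_sum_abs _ _
      _ ≤ ∑ j ∈ Finset.range n, Cψ * r ^ (min j (n - j)) := Finset.sum_le_sum hdiff
      _ = Cψ * ∑ j ∈ Finset.range n, r ^ (min j (n - j)) := by rw [← Finset.mul_sum]
      _ ≤ Cψ * (2 / (1 - r)) := mul_le_mul_of_nonneg_left hmin hCψ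
  have hE1 : |∑ i ∈ Finset.range N, ψ (shiftMap^[i] ω)| ≤ (N : ℝ) * B := by
    calc |∑ i ∈ Finset.range N, ψ (shiftMap^[i] ω)|
        ≤ ∑ i ∈ Finset.range N, |ψ (shiftMap^[i] ω)| := Finset.abs_sum_le_sum_abs _ _
      _ ≤ ∑ _i ∈ Finset.range N, B :=
          Finset.sum_le_sum (fun i _ => hψ_bound _ (shift_iter_mem hωmem i))
      _ = (N : ℝ) * B := by rw [Finset.sum_const, Finset.card_range, nsmul_eq_mul]
  have hE3 : |∑ i ∈ Finset.Ico (N + n) (L + 1), ψ (shiftMap^[i] ω)| ≤ ((N : ℝ) + 1) * B := by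
    calc |∑ i ∈ Finset.Ico (N + n) (L + 1), ψ (shiftMap^[i] ω)|
        ≤ ∑ i ∈ Finset.Ico (N + n) (L + 1), |ψ (shiftMap^[i] ω)| := Finset.abs_sum_le_sum_abs _ _
      _ ≤ ∑ _i ∈ Finset.Ico (N + n) (L + 1), B :=
          Finset.sum_le_sum (fun i _ => hψ_bound _ (shift_iter_mem hωmem i))
      _ = ((L + 1 - (N + n) : ℕ) : ℝ) * B := by
          rw [Finset.sum_const, Nat.card_Ico, nsmul_eq_mul]
      _ = ((N : ℝ) + 1) * B := by
          rw [show L + 1 - (N + n) = N + 1 by omega]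
          push_cast
          ring
  have hT : |∑ j ∈ Finset.range n, ψ (shiftMap^[N + j] ω)|
      ≤ M + (N : ℝ) * B + ((N : ℝ) + 1) * B := by
    have e2 : ∑ j ∈ Finset.range n, ψ (shiftMap^[N + j] ω)
        = ((∑ i ∈ Finset.range (L + 1), ψ (shiftMap^[i] ω))
            + -(∑ i ∈ Finset.range N, ψ (shiftMap^[i] ω)))
          + -(∑ i ∈ Finset.Ico (N + n) (L + 1), ψ (shiftMap^[i] ω)) := by
      rw [hsplit]; ring
    rw [e2]
    calc |((∑ i ∈ Finset.range (L + 1), ψ (shiftMap^[i] ω))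
            + -(∑ i ∈ Finset.range N, ψ (shiftMap^[i] ω)))
          + -(∑ i ∈ Finset.Ico (N + n) (L + 1), ψ (shiftMap^[i] ω))|
        ≤ |(∑ i ∈ Finset.range (L + 1), ψ (shiftMap^[i] ω))
            + -(∑ i ∈ Finset.range N, ψ (shiftMap^[i] ω))|
          + |-(∑ i ∈ Finset.Ico (N + n) (L + 1), ψ (shiftMap^[i] ω))| := abs_add_le _ _
      _ ≤ (|∑ i ∈ Finset.range (L + 1), ψ (shiftMap^[i] ω)|
            + |-(∑ i ∈ Finset.range N, ψ (shiftMap^[i] ω))|)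
          + |-(∑ i ∈ Finset.Ico (N + n) (L + 1), ψ (shiftMap^[i] ω))| :=
          add_le_add_left (abs_add_le _ _) _
      _ = |∑ i ∈ Finset.range (L + 1), ψ (shiftMap^[i] ω)|
            + |∑ i ∈ Finset.range N, ψ (shiftMap^[i] ω)|
          + |∑ i ∈ Finset.Ico (N + n) (L + 1), ψ (shiftMap^[i] ω)| := by
          rw [abs_neg, abs_neg]
      _ ≤ M + (N : ℝ) * B + ((N : ℝ) + 1) * B := by
          exact add_le_add (add_le_add hsum hE1) hE3
  have hfin : ∑ i ∈ Finset.range n, ψ (shiftMap^[i] p)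
      = (∑ j ∈ Finset.range n, (ψ (shiftMap^[j] p) - ψ (shiftMap^[N + j] ω)))
        + ∑ j ∈ Finset.range n, ψ (shiftMap^[N + j] ω) := by
    rw [← Finset.sum_add_distrib]
    exact Finset.sum_congr rfl (fun j _ => by ring)
  rw [hfin]
  calc |(∑ j ∈ Finset.range n, (ψ (shiftMap^[j] p) - ψ (shiftMap^[N + j] ω)))
        + ∑ j ∈ Finset.range n, ψ (shiftMap^[N + j] ω)|
      ≤ |∑ j ∈ Finset.range n, (ψ (shiftMap^[j] p) - ψ (shiftMap^[N + j] ω))|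
        + |∑ j ∈ Finset.range n, ψ (shiftMap^[N + j] ω)| := abs_add_le _ _
    _ ≤ Cψ * (2 / (1 - r)) + (M + (N : ℝ) * B + ((N : ℝ) + 1) * B) := add_le_add hD hT
    _ = M + C := by rw [hCdef]; ring
end
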